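/- Fix real parameters ξ and ν, and let u : [0,∞) → ℝ be smooth satisfying the ODE −u''(t) + ((ξ−t)² + 1)u(t) = ν u(t) for all t ≥ 0. Then for every real polynomial p, the function w := 2pu' − p'u satisfies the pointwise identity −w''(t) + ((ξ−t)² + 1 − ν)w(t) = ( p'''(t) − 4((ξ−t)² + 1 − ν)p'(t) + 4(ξ−t)p(t) ) u(t) for all t ≥ 0. -/

import Mathlib

open MeasureTheory Polynomial

/-- For `u` smooth solving `−u'' + ((ξ−t)² + 1)u = νu` on `[0,∞)` and any real polynomial
`p`, the function `w = 2pu' − p'u` satisfies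
`−w'' + ((ξ−t)² + 1 − ν)w = (p''' − 4((ξ−t)² + 1 − ν)p' + 4(ξ−t)p) u` on `[0,∞)`. -/
theorem polynomial_commutator_identity
    (ξ ν : ℝ) (u : ℝ → ℝ) (hu : ContDiff ℝ (⊤ : ℕ∞) u)
    (hode : ∀ t : ℝ, 0 ≤ t → -(deriv (deriv u) t) + ((ξ - t) ^ 2 + 1) * u t = ν * u t)
    (p : Polynomial ℝ) :
    ∀ t : ℝ, 0 ≤ t →
      -(deriv (deriv (fun s : ℝ =>
            2 * p.eval s * deriv u s - (Polynomial.derivative p).eval s * u s)) t)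
          + ((ξ - t) ^ 2 + 1 - ν) *
              (2 * p.eval t * deriv u t - (Polynomial.derivative p).eval t * u t)
        = ((Polynomial.derivative (Polynomial.derivative (Polynomial.derivative p))).eval t
            - 4 * ((ξ - t) ^ 2 + 1 - ν) * (Polynomial.derivative p).eval t
            + 4 * (ξ - t) * p.eval t) * u t := by
  intro t ht
  have hu' : ContDiff ℝ (⊤ : ℕ∞) u := hu
  have h1 : ContDiff ℝ (⊤ : ℕ∞) (deriv u) := (contDiff_infty_iff_deriv.mp hu').2
  have h2 : ContDiff ℝ (⊤ : ℕ∞) (deriv (deriv u)) := (contDiff_infty_iff_deriv.mp h1).2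
  set u1 := deriv u with hu1
  set u2 := deriv u1 with hu2
  set u3 := deriv u2 with hu3
  have hd0 : ∀ s : ℝ, HasDerivAt u (u1 s) s := fun s =>
    (hu'.differentiable (by simp) s).hasDerivAt
  have hd1 : ∀ s : ℝ, HasDerivAt u1 (u2 s) s := fun s =>
    (h1.differentiable (by simp) s).hasDerivAt
  have hd2 : ∀ s : ℝ, HasDerivAt u2 (u3 s) s := fun s =>
    (h2.differentiable (by simp) s).hasDerivAt
  -- the ODE rewritten
  have hode' : ∀ s : ℝ, 0 ≤ s → u2 s = ((ξ - s) ^ 2 + 1 - ν) * u s := by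
    intro s hs
    have := hode s hs
    linear_combination -this
  -- first derivative of w
  set w : ℝ → ℝ := fun s =>
      2 * p.eval s * u1 s - (Polynomial.derivative p).eval s * u s with hw
  have hwd : ∀ s : ℝ, HasDerivAt w
      (2 * (Polynomial.derivative p).eval s * u1 s + 2 * p.eval s * u2 s
        - ((Polynomial.derivative (Polynomial.derivative p)).eval s * u s
            + (Polynomial.derivative p).eval s * u1 s)) s := by
    intro s
    exact (((p.hasDerivAt s).const_mul 2).mul (hd1 s)).sub
      (((Polynomial.derivative p).hasDerivAt s).mul (hd0 s))
  have hderiv_w : deriv w = fun s =>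
      2 * (Polynomial.derivative p).eval s * u1 s + 2 * p.eval s * u2 s
        - ((Polynomial.derivative (Polynomial.derivative p)).eval s * u s
            + (Polynomial.derivative p).eval s * u1 s) :=
    funext fun s => (hwd s).deriv
  -- second derivative of w
  have hwd2 : HasDerivAt (deriv w)
      (2 * (Polynomial.derivative (Polynomial.derivative p)).eval t * u1 t
        + 2 * (Polynomial.derivative p).eval t * u2 t
        + (2 * (Polynomial.derivative p).eval t * u2 t + 2 * p.eval t * u3 t)
        - (((Polynomial.derivative (Polynomial.derivative
              (Polynomial.derivative p))).eval t * u t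
            + (Polynomial.derivative (Polynomial.derivative p)).eval t * u1 t)
          + ((Polynomial.derivative (Polynomial.derivative p)).eval t * u1 t
            + (Polynomial.derivative p).eval t * u2 t))) t := by
    rw [hderiv_w]
    have hA := ((((Polynomial.derivative p).hasDerivAt t).const_mul 2).mul (hd1 t)).add
      (((p.hasDerivAt t).const_mul 2).mul (hd2 t))
    have hB := (((Polynomial.derivative (Polynomial.derivative p)).hasDerivAt t).mul
      (hd0 t)).add (((Polynomial.derivative p).hasDerivAt t).mul (hd1 t))
    exact hA.sub hB
  have hw2 : deriv (deriv w) t =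
      3 * (Polynomial.derivative p).eval t * u2 t + 2 * p.eval t * u3 t
        - (Polynomial.derivative (Polynomial.derivative
            (Polynomial.derivative p))).eval t * u t := by
    rw [hwd2.deriv]; ring
  -- identify u3 t using the ODE (one-sided)
  have hVd : HasDerivAt (fun s : ℝ => ((ξ - s) ^ 2 + 1 - ν) * u s)
      (-2 * (ξ - t) * u t + ((ξ - t) ^ 2 + 1 - ν) * u1 t) t := by
    have hb : HasDerivAt (fun s : ℝ => (ξ - s) ^ 2 + 1 - ν) (-2 * (ξ - t)) t := by
      have h0 : HasDerivAt (fun s : ℝ => ξ - s) (-1) t := (hasDerivAt_id t).const_sub ξ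
      have h0' := (h0.pow 2).add_const 1
      have h0'' := h0'.sub_const ν
      refine h0''.congr_deriv ?_
      norm_num
    exact (hb.mul (hd0 t)).congr_deriv (by ring)
  have hu3 : u3 t = -2 * (ξ - t) * u t + ((ξ - t) ^ 2 + 1 - ν) * u1 t := by
    have hmem : t ∈ Set.Ici (0 : ℝ) := ht
    have hA : HasDerivWithinAt u2 (u3 t) (Set.Ici 0) t := (hd2 t).hasDerivWithinAt
    have hB : HasDerivWithinAt (fun s : ℝ => ((ξ - s) ^ 2 + 1 - ν) * u s) (u3 t)
        (Set.Ici 0) t :=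
      hA.congr (fun s hs => (hode' s hs).symm) (hode' t ht).symm
    have hC := hVd.hasDerivWithinAt (s := Set.Ici 0)
    exact hB.derivWithin (uniqueDiffOn_Ici 0 t hmem) ▸
      hC.derivWithin (uniqueDiffOn_Ici 0 t hmem)
  show -(deriv (deriv w) t) + _ = _
  rw [hw2, hu3, hode' t ht]
  ring
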